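/- For n ≥ 3, there exists a quandle of cyclic type with n elements if and only if n is a power of a prime number. -/

import Mathlib

/-- The inner automorphism group of a quandle: the subgroup of permutations
generated by the maps `φ x : y ↦ x ◃ y`. -/
def Inn (X : Type*) [Quandle X] : Subgroup (Equiv.Perm X) :=
  Subgroup.closure (Set.range (fun x : X => Rack.act' x))


/-- A finite quandle is of cyclic type if each `φ x` is a cycle whose unique
fixed point is `x` (i.e. it acts as an `(n-1)`-cycle on `X \ {x}`). -/
def IsCyclicType (X : Type*) [Quandle X] : Prop :=
  ∀ x : X, Equiv.Perm.IsCycle (Rack.act' x) ∧ ∀ y : X, Rack.act' x y = y ↔ y = x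

set_option linter.unusedSectionVars false

open Quandles Equiv Equiv.Perm

/-- Alexander quandle on a field `F` with parameter a unit `α`. -/
def alexQ (F : Type) [Field F] (α : Fˣ) : Quandle F where
  act x y := (1 - (α : F)) * x + (α : F) * y
  self_distrib := by intros; ring
  invAct x y := ((α⁻¹ : Fˣ) : F) * (y - (1 - (α : F)) * x)
  left_inv := by
    intro x y
    have hab : ((α⁻¹ : Fˣ) : F) * (α : F) = 1 := by exact_mod_cast α.inv_mul
    dsimp only
    linear_combination y * hab
  right_inv := by
    intro x y
    have hab : ((α : F)) * ((α⁻¹ : Fˣ) : F) = 1 := by exact_mod_cast α.mul_inv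
    dsimp only
    linear_combination (y - (1 - (α : F)) * x) * hab
  fix := by intros; ring

theorem cyclicType_of_isPrimePow (n : ℕ) (h3 : 3 ≤ n) (hpp : IsPrimePow n) :
    (∃ (X : Type) (_ : Fintype X) (_ : Quandle X),
      Fintype.card X = n ∧ IsCyclicType X) := by
  obtain ⟨p, k, hp, hk, rfl⟩ := hpp
  rw [← Nat.prime_iff] at hp
  haveI : Fact p.Prime := ⟨hp⟩
  set F := GaloisField p k with hF
  haveI : Fintype F := Fintype.ofFinite F
  haveI : DecidableEq F := Classical.decEq F
  have hcard : Fintype.card F = p ^ k := by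
    rw [← Nat.card_eq_fintype_card]
    exact GaloisField.card p k (by rintro rfl; simp at hk)
  obtain ⟨α, hα⟩ := IsCyclic.exists_generator (α := Fˣ)
  have hcardu : Fintype.card Fˣ = p ^ k - 1 := by rw [Fintype.card_units, hcard]
  have h2 : 2 ≤ Fintype.card Fˣ := by omega
  have hα1 : (α : F) ≠ 1 := by
    intro h
    have hα' : α = 1 := Units.ext h
    obtain ⟨u, hu⟩ := Fintype.exists_ne_of_one_lt_card (by omega) (1 : Fˣ)
    obtain ⟨m, hm⟩ := hα u
    have hm' : (1 : Fˣ) ^ m = u := by rw [← hα']; exact hm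
    rw [one_zpow] at hm'
    exact hu hm'.symm
  letI : Quandle F := alexQ F α
  refine ⟨F, inferInstance, ‹Quandle F›, hcard, ?_⟩
  intro x
  have hact : ∀ y : F, Rack.act' x y = (1 - (α : F)) * x + (α : F) * y := fun y => rfl
  have hfix : ∀ y : F, Rack.act' x y = y ↔ y = x := by
    intro y
    rw [hact]
    constructor
    · intro h
      have h' : (1 - (α : F)) * y = (1 - (α : F)) * x := by linear_combination -h
      have h1 : (1 - (α : F)) ≠ 0 := sub_ne_zero.mpr (fun h => hα1 h.symm)
      exact mul_left_cancel₀ h1 h'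
    · intro h; rw [h]; ring
  refine ⟨?_, hfix⟩
  have hpow : ∀ (m : ℕ) (y : F), ((Rack.act' x) ^ m) y = ((α ^ m : Fˣ) : F) * (y - x) + x := by
    intro m
    induction m with
    | zero => intro y; simp
    | succ m ih =>
      intro y
      rw [pow_succ', Equiv.Perm.mul_apply, ih, hact]
      push_cast
      ring
  refine ⟨x + 1, ?_, ?_⟩
  · rw [Ne, hfix]; intro h; exact one_ne_zero (by linear_combination h)
  · intro z hz
    have hzx : z ≠ x := fun h => hz ((hfix z).mpr h)
    have hzx' : z - x ≠ 0 := sub_ne_zero.mpr hzx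
    obtain ⟨m, hm⟩ := (mem_powers_iff_mem_zpowers.mpr (hα (Units.mk0 (z - x) hzx')) : _)
    refine ⟨(m : ℤ), ?_⟩
    rw [zpow_natCast, hpow m (x + 1)]
    have hm' : α ^ m = Units.mk0 (z - x) hzx' := hm
    have : ((α ^ m : Fˣ) : F) = z - x := by rw [hm']; rfl
    rw [this]; ring

namespace CyclicTypeFwd

variable {X : Type} [Quandle X]

theorem phi_mem (x : X) : Rack.act' x ∈ Inn X :=
  Subgroup.subset_closure ⟨x, rfl⟩

theorem inn_conj {g : Equiv.Perm X} (hg : g ∈ Inn X) (y : X) :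
    g * Rack.act' y * g⁻¹ = Rack.act' (g y) := by
  revert y
  refine Subgroup.closure_induction (k := Set.range (fun x : X => Rack.act' x))
    (p := fun g _ => ∀ y, g * Rack.act' y * g⁻¹ = Rack.act' (g y)) ?_ ?_ ?_ ?_ hg
  · rintro _ ⟨x, rfl⟩ y
    rw [← Rack.ad_conj x y]
    rfl
  · intro y; simp
  · intro a b _ _ ha hb y
    have : a * b * Rack.act' y * (a * b)⁻¹ = a * (b * Rack.act' y * b⁻¹) * a⁻¹ := by group
    rw [this, hb, ha]
    rfl
  · intro a _ ha y
    have h := ha (a⁻¹ y)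
    have h2 : a ((a⁻¹ : Perm X) y) = y := by simp
    rw [h2] at h
    have : a⁻¹ * Rack.act' y * (a⁻¹)⁻¹ = a⁻¹ * (a * Rack.act' (a⁻¹ y) * a⁻¹) * a := by
      rw [h]; group
    rw [this]; group

variable (hc : IsCyclicType X)
include hc

theorem fix_iff (x y : X) : Rack.act' x y = y ↔ y = x := (hc x).2 y

theorem exists_zpow (x : X) {y z : X} (hy : y ≠ x) (hz : z ≠ x) :
    ∃ i : ℤ, ((Rack.act' x) ^ i) y = z :=
  (hc x).1.exists_zpow_eq (fun h => hy ((fix_iff hc x y).mp h))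
    (fun h => hz ((fix_iff hc x z).mp h))

theorem stab_free {g : Equiv.Perm X} (hg : g ∈ Inn X) {x y : X} (hxy : x ≠ y)
    (hx : g x = x) (hy : g y = y) : g = 1 := by
  have hcom : g * Rack.act' x = Rack.act' x * g := by
    have h := inn_conj hg x
    rw [hx] at h
    calc g * Rack.act' x = g * Rack.act' x * g⁻¹ * g := by group
    _ = Rack.act' x * g := by rw [h]
  have hzpow : ∀ i : ℤ, g * (Rack.act' x) ^ i = (Rack.act' x) ^ i * g :=
    fun i => (Commute.zpow_right hcom i)
  ext z
  by_cases hzx : z = x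
  · rw [hzx, hx]; rfl
  · obtain ⟨i, hi⟩ := exists_zpow hc x (Ne.symm hxy) hzx
    have : g (((Rack.act' x) ^ i) y) = ((Rack.act' x) ^ i) (g y) := by
      rw [← Equiv.Perm.mul_apply, ← Equiv.Perm.mul_apply, hzpow i]
    rw [hi, hy, hi] at this
    rw [this]; rfl

theorem sharp {g h : Equiv.Perm X} (hg : g ∈ Inn X) (hh : h ∈ Inn X) {x y : X}
    (hxy : x ≠ y) (hx : g x = h x) (hy : g y = h y) : g = h := by
  have h1 : h⁻¹ * g = 1 := by
    apply stab_free hc (mul_mem (inv_mem hh) hg) hxy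
    · rw [Equiv.Perm.mul_apply, hx]; simp
    · rw [Equiv.Perm.mul_apply, hy]; simp
  calc g = h * (h⁻¹ * g) := by group
  _ = h := by rw [h1]; group

theorem stab_trans (x : X) {y z : X} (hy : y ≠ x) (hz : z ≠ x) :
    ∃ g ∈ Inn X, g x = x ∧ g y = z := by
  obtain ⟨i, hi⟩ := exists_zpow hc x hy hz
  refine ⟨(Rack.act' x) ^ i, zpow_mem (phi_mem x) i, ?_, hi⟩
  exact zpow_apply_eq_self_of_apply_eq_self ((fix_iff hc x x).mpr rfl) i

theorem trans_act [DecidableEq X] [Fintype X] (h3 : 3 ≤ Fintype.card X) (x y : X) :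
    ∃ g ∈ Inn X, g x = y := by
  by_cases hxy : x = y
  · exact ⟨1, one_mem _, by rw [hxy]; rfl⟩
  · have hns : ¬ (Finset.univ ⊆ ({x, y} : Finset X)) := by
      intro h
      have h1 := Finset.card_le_card h
      have h2 : ({x, y} : Finset X).card ≤ 2 := Finset.card_insert_le _ _ |>.trans (by simp)
      rw [Finset.card_univ] at h1
      omega
    obtain ⟨z, -, hz⟩ := Finset.not_subset.mp hns
    simp only [Finset.mem_insert, Finset.mem_singleton, not_or] at hz
    obtain ⟨i, hi⟩ := exists_zpow hc z (fun h => hz.1 h.symm) (fun h => hz.2 h.symm)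
    exact ⟨(Rack.act' z) ^ i, zpow_mem (phi_mem z) i, hi⟩

theorem two_trans [DecidableEq X] [Fintype X] (h3 : 3 ≤ Fintype.card X) {x y x' y' : X}
    (hxy : x ≠ y) (hxy' : x' ≠ y') : ∃ g ∈ Inn X, g x = x' ∧ g y = y' := by
  obtain ⟨g₁, hg₁, hg₁x⟩ := trans_act hc h3 x x'
  have hgy : g₁ y ≠ x' := by
    rw [← hg₁x]
    intro h
    exact hxy (g₁.injective h).symm |>.elim
  obtain ⟨g₂, hg₂, hg₂x, hg₂y⟩ := stab_trans hc x' hgy (Ne.symm hxy')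
  refine ⟨g₂ * g₁, mul_mem hg₂ hg₁, ?_, ?_⟩
  · rw [Equiv.Perm.mul_apply, hg₁x, hg₂x]
  · rw [Equiv.Perm.mul_apply, hg₂y]

variable [Fintype X]

theorem card_inn (h3 : 3 ≤ Fintype.card X) :
    Nat.card {g : Perm X // g ∈ Inn X} = Fintype.card X * (Fintype.card X - 1) := by
  classical
  obtain ⟨x₀, y₀, hxy⟩ := Fintype.exists_pair_of_one_lt_card (α := X) (by omega)
  rw [Nat.card_eq_fintype_card, Fintype.card_subtype]
  have hbij : (Finset.univ.filter (· ∈ Inn X)).card = (Finset.univ : Finset X).offDiag.card := by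
    apply Finset.card_bij (fun g _ => (g x₀, g y₀))
    · intro g hg
      simp only [Finset.mem_offDiag]
      exact ⟨Finset.mem_univ _, Finset.mem_univ _, fun h => hxy (g.injective h)⟩
    · intro g hg g' hg' h
      simp only [Finset.mem_filter] at hg hg'
      have h1 := congrArg Prod.fst h
      have h2 := congrArg Prod.snd h
      exact sharp hc hg.2 hg'.2 hxy h1 h2
    · intro p hp
      simp only [Finset.mem_offDiag] at hp
      obtain ⟨g, hg, hg1, hg2⟩ := two_trans hc h3 hxy hp.2.2
      exact ⟨g, Finset.mem_filter.mpr ⟨Finset.mem_univ _, hg⟩, Prod.ext hg1 hg2⟩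
  rw [hbij, Finset.offDiag_card, Finset.card_univ, Nat.mul_sub, mul_one]

theorem card_stab (h3 : 3 ≤ Fintype.card X) (x : X) :
    Nat.card {g : Perm X // g ∈ Inn X ∧ g x = x} = Fintype.card X - 1 := by
  classical
  obtain ⟨y₁, hy₁⟩ := Fintype.exists_ne_of_one_lt_card (α := X) (by omega) x
  rw [Nat.card_eq_fintype_card, Fintype.card_subtype]
  have hbij : (Finset.univ.filter (fun g : Perm X => g ∈ Inn X ∧ g x = x)).card
      = ((Finset.univ : Finset X).erase x).card := by
    apply Finset.card_bij (fun g _ => g y₁)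
    · intro g hg
      simp only [Finset.mem_filter] at hg
      exact Finset.mem_erase.mpr
        ⟨fun h => hy₁ (g.injective (h.trans hg.2.2.symm)), Finset.mem_univ _⟩
    · intro g hg g' hg' h
      simp only [Finset.mem_filter] at hg hg'
      exact sharp hc hg.2.1 hg'.2.1 (Ne.symm hy₁) (hg.2.2.trans hg'.2.2.symm) h
    · intro z hz
      obtain ⟨g, hg, hgx, hgy⟩ := stab_trans hc x hy₁ (Finset.mem_erase.mp hz).1
      exact ⟨g, Finset.mem_filter.mpr ⟨Finset.mem_univ _, hg, hgx⟩, hgy⟩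
  rw [hbij, Finset.card_erase_of_mem (Finset.mem_univ x), Finset.card_univ]

theorem card_fpf (h3 : 3 ≤ Fintype.card X) :
    Nat.card {g : Perm X // g ∈ Inn X ∧ ∀ x, g x ≠ x} = Fintype.card X - 1 := by
  classical
  set n := Fintype.card X with hn
  have hne : Nonempty X := Fintype.card_pos_iff.mp (by omega)
  obtain ⟨x₀⟩ := hne
  rw [Nat.card_eq_fintype_card, Fintype.card_subtype]
  set Fp : Finset (Perm X) := Finset.univ.filter (fun g : Perm X => g ∈ Inn X ∧ ∀ x, g x ≠ x)
    with hFp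
  set A : X → Finset (Perm X) :=
    fun x => Finset.univ.filter (fun g : Perm X => (g ∈ Inn X ∧ g x = x) ∧ g ≠ 1) with hAdef
  have hstabcard : ∀ x : X,
      (Finset.univ.filter (fun g : Perm X => g ∈ Inn X ∧ g x = x)).card = n - 1 := by
    intro x
    rw [← Fintype.card_subtype, ← Nat.card_eq_fintype_card]
    exact card_stab hc h3 x
  have hA : ∀ x, (A x).card = n - 2 := by
    intro x
    have h1 : A x = (Finset.univ.filter (fun g : Perm X => g ∈ Inn X ∧ g x = x)).erase 1 := by
      ext g
      simp only [hAdef, Finset.mem_filter, Finset.mem_erase, Finset.mem_univ, true_and]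
      tauto
    have h2 : (1 : Perm X) ∈ Finset.univ.filter (fun g : Perm X => g ∈ Inn X ∧ g x = x) :=
      Finset.mem_filter.mpr ⟨Finset.mem_univ _, one_mem _, rfl⟩
    rw [h1, Finset.card_erase_of_mem h2, hstabcard x]
    omega
  have hdecomp : Finset.univ.filter (· ∈ Inn X)
      = insert 1 ((Finset.univ.biUnion A) ∪ Fp) := by
    ext g
    simp only [Finset.mem_filter, Finset.mem_insert, Finset.mem_union, Finset.mem_biUnion,
      Finset.mem_univ, true_and, hAdef, hFp]
    constructor
    · intro hg
      by_cases h1 : g = 1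
      · exact Or.inl h1
      · by_cases h2 : ∃ x, g x = x
        · obtain ⟨x, hx⟩ := h2
          exact Or.inr (Or.inl ⟨x, ⟨⟨hg, hx⟩, h1⟩⟩)
        · push_neg at h2
          exact Or.inr (Or.inr ⟨hg, h2⟩)
    · rintro (rfl | (⟨x, ⟨⟨hg, _⟩, _⟩⟩ | ⟨hg, _⟩))
      · exact one_mem _
      · exact hg
      · exact hg
  have h1notin : (1 : Perm X) ∉ (Finset.univ.biUnion A) ∪ Fp := by
    simp only [Finset.mem_union, Finset.mem_biUnion, hAdef, hFp, Finset.mem_filter,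
      Finset.mem_univ, true_and, not_or]
    constructor
    · rintro ⟨x, ⟨-, h⟩⟩; exact h rfl
    · rintro ⟨-, h⟩; exact h x₀ rfl
  have hdisj : Disjoint (Finset.univ.biUnion A) Fp := by
    rw [Finset.disjoint_left]
    intro g hg hg'
    simp only [Finset.mem_biUnion, hAdef, Finset.mem_filter, Finset.mem_univ, true_and] at hg
    simp only [hFp, Finset.mem_filter, Finset.mem_univ, true_and] at hg'
    obtain ⟨x, ⟨⟨-, hx⟩, -⟩⟩ := hg
    exact hg'.2 x hx
  have hpairwise : ∀ x ∈ Finset.univ, ∀ y ∈ Finset.univ, x ≠ y → Disjoint (A x) (A y) := by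
    intro x _ y _ hxy
    rw [Finset.disjoint_left]
    intro g hgx hgy
    simp only [hAdef, Finset.mem_filter, Finset.mem_univ, true_and] at hgx hgy
    exact hgx.2 (stab_free hc hgx.1.1 hxy hgx.1.2 hgy.1.2)
  have hcount : n * (n - 1) = 1 + (n * (n - 2) + Fp.card) := by
    have hG : (Finset.univ.filter (· ∈ Inn X)).card = n * (n - 1) := by
      rw [← Fintype.card_subtype, ← Nat.card_eq_fintype_card]
      exact card_inn hc h3
    rw [← hG, hdecomp, Finset.card_insert_of_notMem h1notin,
      Finset.card_union_of_disjoint hdisj, Finset.card_biUnion hpairwise]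
    simp only [hA, Finset.sum_const, Finset.card_univ, smul_eq_mul, ← hn]
    ring
  have hkey : n * (n - 1) = n * (n - 2) + n := by
    have h : n - 1 = (n - 2) + 1 := by omega
    rw [h, Nat.mul_add, mul_one]
  set a := n * (n - 2)
  omega

/-- The stabilizer of `z` inside the inner group, as a subgroup of `Perm X`. -/
def StabInn (X : Type) [Quandle X] (z : X) : Subgroup (Perm X) where
  carrier := {g | g ∈ Inn X ∧ g z = z}
  one_mem' := ⟨one_mem _, rfl⟩
  mul_mem' := fun ha hb => ⟨mul_mem ha.1 hb.1, by
    rw [Equiv.Perm.mul_apply, hb.2, ha.2]⟩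
  inv_mem' := fun ha => ⟨inv_mem ha.1, by
    conv_lhs => rw [← ha.2]
    simp⟩

theorem card_stabInn (h3 : 3 ≤ Fintype.card X) (z : X) :
    Nat.card (StabInn X z) = Fintype.card X - 1 := by
  rw [Nat.card_congr (Equiv.subtypeEquivRight (fun g => Iff.rfl :
    ∀ g : Perm X, g ∈ StabInn X z ↔ g ∈ Inn X ∧ g z = z))]
  exact card_stab hc h3 z

/-- In the even case, every fixed-point-free inner element is an involution. -/
theorem fpf_sq (h3 : 3 ≤ Fintype.card X) (heven : 2 ∣ Fintype.card X) {g : Perm X}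
    (hg : g ∈ Inn X) (hg' : ∀ x, g x ≠ x) : g * g = 1 := by
  classical
  set n := Fintype.card X with hn
  have hne : Nonempty X := Fintype.card_pos_iff.mp (by omega)
  obtain ⟨x₀⟩ := hne
  set Fp : Finset (Perm X) := Finset.univ.filter (fun g : Perm X => g ∈ Inn X ∧ ∀ x, g x ≠ x)
    with hFp
  have hFpcard : Fp.card = n - 1 := by
    rw [hFp, ← Fintype.card_subtype, ← Nat.card_eq_fintype_card]
    exact card_fpf hc h3
  have hkey : ∀ y ∈ Finset.univ.erase x₀, ∀ (hy : y ∈ Finset.univ.erase x₀),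
      True := fun _ _ _ => trivial
  -- the swap construction
  have hchoice : ∀ y : X, y ∈ Finset.univ.erase x₀ →
      ∃ c : Perm X, c ∈ Inn X ∧ c x₀ = y ∧ c y = x₀ := by
    intro y hy
    have h1 : x₀ ≠ y := fun h => (Finset.mem_erase.mp hy).1 h.symm
    exact two_trans hc h3 h1 h1.symm
  set f : ∀ y ∈ Finset.univ.erase x₀, Perm X := fun y hy => (hchoice y hy).choose with hfdef
  have hfspec : ∀ y hy, (f y hy) ∈ Inn X ∧ (f y hy) x₀ = y ∧ (f y hy) y = x₀ :=
    fun y hy => (hchoice y hy).choose_spec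
  have hfsq : ∀ y hy, (f y hy) * (f y hy) = 1 := by
    intro y hy
    obtain ⟨hmem, hx, hyy⟩ := hfspec y hy
    have h1 : x₀ ≠ y := fun h => (Finset.mem_erase.mp hy).1 h.symm
    apply sharp hc (mul_mem hmem hmem) (one_mem _) h1
    · rw [Equiv.Perm.mul_apply, hx, hyy]; rfl
    · rw [Equiv.Perm.mul_apply, hyy, hx]; rfl
  have hfmem : ∀ y hy, f y hy ∈ Fp := by
    intro y hy
    obtain ⟨hmem, hx, hyy⟩ := hfspec y hy
    have h1 : x₀ ≠ y := fun h => (Finset.mem_erase.mp hy).1 h.symm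
    refine Finset.mem_filter.mpr ⟨Finset.mem_univ _, hmem, ?_⟩
    intro z hz
    -- f y hy is an involution fixing z; its order 2 divides n - 1, contradiction
    have hne1 : f y hy ≠ 1 := by
      intro h
      rw [h] at hx
      exact h1 hx
    have horder : orderOf (f y hy) = 2 :=
      orderOf_eq_prime (by rw [pow_two]; exact hfsq y hy) hne1
    have hdvd : orderOf (⟨f y hy, ⟨hmem, hz⟩⟩ : StabInn X z) ∣ Nat.card (StabInn X z) :=
      orderOf_dvd_natCard _
    rw [Subgroup.orderOf_mk (f y hy) (⟨hmem, hz⟩ : f y hy ∈ StabInn X z), horder,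
      card_stabInn hc h3 z] at hdvd
    omega
  have hsurj := Finset.surj_on_of_inj_on_of_card_le f hfmem
    (fun y₁ y₂ hy₁ hy₂ heq => by
      have h1 := (hfspec y₁ hy₁).2.1
      have h2 := (hfspec y₂ hy₂).2.1
      rw [heq] at h1
      rw [h1] at h2
      exact h2)
    (by rw [hFpcard, Finset.card_erase_of_mem (Finset.mem_univ x₀), Finset.card_univ])
  have hgFp : g ∈ Fp := Finset.mem_filter.mpr ⟨Finset.mem_univ _, hg, hg'⟩
  obtain ⟨y, hy, hgf⟩ := hsurj g hgFp
  rw [hgf]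
  exact hfsq y hy

section Odd

variable (h3 : 3 ≤ Fintype.card X)
include h3

/-- The canonical involution associated to a point (odd case). -/
noncomputable def tau (a : X) : Perm X := (Rack.act' a) ^ ((Fintype.card X - 1) / 2)

omit h3 in
theorem orderOf_phi (a : X) : orderOf (Rack.act' a) = Fintype.card X - 1 := by
  classical
  rw [(hc a).1.orderOf]
  have hsupp : Equiv.Perm.support (Rack.act' a) = Finset.univ.erase a := by
    ext y
    rw [Equiv.Perm.mem_support, Finset.mem_erase]
    constructor
    · intro h; exact ⟨fun h' => h ((fix_iff hc a y).mpr h'), Finset.mem_univ _⟩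
    · intro h h'; exact h.1 ((fix_iff hc a y).mp h')
  rw [hsupp, Finset.card_erase_of_mem (Finset.mem_univ a), Finset.card_univ]

theorem tau_mem (a : X) : tau a ∈ Inn X := pow_mem (phi_mem a) _

theorem tau_sq (hodd : ¬ 2 ∣ Fintype.card X) (a : X) : tau a * tau a = 1 := by
  rw [tau, ← pow_add]
  have h : (Fintype.card X - 1) / 2 + (Fintype.card X - 1) / 2 = Fintype.card X - 1 := by omega
  rw [h, ← orderOf_phi hc a, pow_orderOf_eq_one]

theorem tau_ne_one (a : X) : tau a ≠ 1 := by
  intro h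
  have hdvd : orderOf (Rack.act' a) ∣ (Fintype.card X - 1) / 2 :=
    orderOf_dvd_of_pow_eq_one h
  rw [orderOf_phi hc a] at hdvd
  have := Nat.le_of_dvd (by omega) hdvd
  omega

theorem tau_fix (a : X) : tau a a = a :=
  Equiv.Perm.pow_apply_eq_self_of_apply_eq_self ((fix_iff hc a a).mpr rfl) _

theorem tau_fix_only {a z : X} (hz : tau a z = z) : z = a := by
  by_contra h
  exact tau_ne_one hc h3 a
    (stab_free hc (tau_mem hc h3 a) (Ne.symm h) (tau_fix hc h3 a) hz)

theorem tau_inj {a b : X} (h : tau a = tau b) : a = b := by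
  have := tau_fix hc h3 a
  rw [h] at this
  exact tau_fix_only hc h3 this

theorem tau_mul_fpf (hodd : ¬ 2 ∣ Fintype.card X) {a b : X} (hab : a ≠ b) (w : X) :
    (tau a * tau b) w ≠ w := by
  have inv_swap : ∀ σ : Perm X, σ * σ = 1 → ∀ {x y : X}, σ x = y → σ y = x := by
    intro σ hσ x y hxy
    rw [← hxy, ← Equiv.Perm.mul_apply, hσ, Equiv.Perm.one_apply]
  intro hw
  rw [Equiv.Perm.mul_apply] at hw
  by_cases hvw : tau b w = w
  · rw [hvw] at hw
    exact hab ((tau_fix_only hc h3 hw).symm.trans (tau_fix_only hc h3 hvw))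
  · have haw : tau a (tau b w) = w := hw
    have hav : tau a w = tau b w := inv_swap _ (tau_sq hc h3 hodd a) haw
    have hbv : tau b (tau b w) = w := inv_swap _ (tau_sq hc h3 hodd b) rfl
    have htaueq : tau a = tau b := by
      apply sharp hc (tau_mem hc h3 a) (tau_mem hc h3 b) (Ne.symm hvw)
      · exact hav
      · rw [haw, hbv]
    exact hab (tau_inj hc h3 htaueq)

/-- In the odd case, every fixed-point-free inner element is `tau a * tau x₀`,
and also `tau x₀ * tau b`. -/
theorem fpf_eq_tau_mul (hodd : ¬ 2 ∣ Fintype.card X) (x₀ : X) {g : Perm X}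
    (hg : g ∈ Inn X) (hg' : ∀ x, g x ≠ x) :
    (∃ a, g = tau a * tau x₀) ∧ (∃ b, g = tau x₀ * tau b) := by
  classical
  set n := Fintype.card X with hn
  set Fp : Finset (Perm X) := Finset.univ.filter (fun g : Perm X => g ∈ Inn X ∧ ∀ x, g x ≠ x)
    with hFp
  have hFpcard : Fp.card = n - 1 := by
    rw [hFp, ← Fintype.card_subtype, ← Nat.card_eq_fintype_card]
    exact card_fpf hc h3
  have h1Fp : (1 : Perm X) ∉ Fp := by
    intro h
    obtain ⟨x⟩ : Nonempty X := Fintype.card_pos_iff.mp (by omega)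
    exact (Finset.mem_filter.mp h).2.2 x rfl
  have hinscard : (insert (1 : Perm X) Fp).card = n := by
    rw [Finset.card_insert_of_notMem h1Fp, hFpcard]
    omega
  have hgFp : g ∈ insert (1 : Perm X) Fp :=
    Finset.mem_insert_of_mem (Finset.mem_filter.mpr ⟨Finset.mem_univ _, hg, hg'⟩)
  have hmemins : ∀ c : X, ∀ d : X, tau c * tau d ∈ insert (1 : Perm X) Fp := by
    intro c d
    by_cases hcd : c = d
    · rw [hcd, tau_sq hc h3 hodd]; exact Finset.mem_insert_self _ _
    · exact Finset.mem_insert_of_mem (Finset.mem_filter.mpr ⟨Finset.mem_univ _,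
        mul_mem (tau_mem hc h3 c) (tau_mem hc h3 d), tau_mul_fpf hc h3 hodd hcd⟩)
  constructor
  · have hsurj := Finset.surj_on_of_inj_on_of_card_le
      (s := (Finset.univ : Finset X)) (t := insert (1 : Perm X) Fp)
      (fun a _ => tau a * tau x₀) (fun a _ => hmemins a x₀)
      (fun a₁ a₂ _ _ heq => tau_inj hc h3 (mul_right_cancel heq))
      (by rw [hinscard, Finset.card_univ])
    obtain ⟨a, _, ha⟩ := hsurj g hgFp
    exact ⟨a, ha⟩
  · have hsurj := Finset.surj_on_of_inj_on_of_card_le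
      (s := (Finset.univ : Finset X)) (t := insert (1 : Perm X) Fp)
      (fun b _ => tau x₀ * tau b) (fun b _ => hmemins x₀ b)
      (fun b₁ b₂ _ _ heq => tau_inj hc h3 (mul_left_cancel heq))
      (by rw [hinscard, Finset.card_univ])
    obtain ⟨b, _, hb⟩ := hsurj g hgFp
    exact ⟨b, hb⟩

end Odd

/-- Key closure property: the product of two fixed-point-free inner elements is
trivial or fixed-point-free. -/
theorem fpf_mul (h3 : 3 ≤ Fintype.card X) {g h : Perm X}
    (hg : g ∈ Inn X) (hg' : ∀ x, g x ≠ x) (hh : h ∈ Inn X) (hh' : ∀ x, h x ≠ x) :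
    g * h = 1 ∨ ∀ x, (g * h) x ≠ x := by
  by_cases heven : 2 ∣ Fintype.card X
  · -- even case : both are involutions
    by_cases hex : ∃ w, (g * h) w = w
    · left
      obtain ⟨w, hw⟩ := hex
      rw [Equiv.Perm.mul_apply] at hw
      have inv_swap : ∀ σ : Perm X, σ * σ = 1 → ∀ {x y : X}, σ x = y → σ y = x := by
        intro σ hσ x y hxy
        rw [← hxy, ← Equiv.Perm.mul_apply, hσ, Equiv.Perm.one_apply]
      have hvw : h w ≠ w := hh' w
      have hgsq := fpf_sq hc h3 heven hg hg'
      have hhsq := fpf_sq hc h3 heven hh hh'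
      have hgv : g (h w) = w := hw
      have hgw : g w = h w := inv_swap _ hgsq hgv
      have hhv : h (h w) = w := inv_swap _ hhsq rfl
      have hgh : g = h := by
        apply sharp hc hg hh (Ne.symm hvw)
        · exact hgw
        · rw [hgv, hhv]
      rw [hgh, hhsq]
    · right
      push_neg at hex
      exact hex
  · -- odd case
    classical
    obtain ⟨x₀⟩ : Nonempty X := Fintype.card_pos_iff.mp (by omega)
    obtain ⟨⟨a, ha⟩, -⟩ := fpf_eq_tau_mul hc h3 heven x₀ hg hg'
    obtain ⟨-, ⟨b, hb⟩⟩ := fpf_eq_tau_mul hc h3 heven x₀ hh hh'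
    have hprod : g * h = tau a * tau b := by
      rw [ha, hb]
      have h0 := tau_sq hc h3 heven x₀
      calc tau a * tau x₀ * (tau x₀ * tau b) = tau a * (tau x₀ * tau x₀) * tau b := by group
      _ = tau a * tau b := by rw [h0, mul_one]
    by_cases hab : a = b
    · left; rw [hprod, hab, tau_sq hc h3 heven]
    · right; rw [hprod]; exact tau_mul_fpf hc h3 heven hab

/-- The "Frobenius kernel": identity together with fixed-point-free inner elements. -/
def Kernel (h3 : 3 ≤ Fintype.card X) : Subgroup (Perm X) where
  carrier := {g | g ∈ Inn X ∧ (g = 1 ∨ ∀ x, g x ≠ x)}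
  one_mem' := ⟨one_mem _, Or.inl rfl⟩
  inv_mem' := by
    rintro g ⟨hg, h1 | hfpf⟩
    · exact ⟨inv_mem hg, Or.inl (by rw [h1]; simp)⟩
    · refine ⟨inv_mem hg, Or.inr fun x hx => ?_⟩
      apply hfpf x
      conv_rhs => rw [← (by simp : g (g⁻¹ x) = x)]
      rw [hx]
  mul_mem' := by
    rintro g h ⟨hg, hg'⟩ ⟨hh, hh'⟩
    refine ⟨mul_mem hg hh, ?_⟩
    rcases hg' with rfl | hg'
    · rw [one_mul]; exact hh'
    rcases hh' with rfl | hh'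
    · rw [mul_one]; exact Or.inr hg'
    exact fpf_mul hc h3 hg hg' hh hh'

theorem mem_kernel (h3 : 3 ≤ Fintype.card X) {g : Perm X} :
    g ∈ Kernel hc h3 ↔ g ∈ Inn X ∧ (g = 1 ∨ ∀ x, g x ≠ x) := Iff.rfl

theorem card_kernel (h3 : 3 ≤ Fintype.card X) :
    Nat.card (Kernel hc h3) = Fintype.card X := by
  classical
  set n := Fintype.card X with hn
  obtain ⟨x₀⟩ : Nonempty X := Fintype.card_pos_iff.mp (by omega)
  have h1 : Nat.card (Kernel hc h3)
      = Nat.card {g : Perm X // g ∈ Inn X ∧ (g = 1 ∨ ∀ x, g x ≠ x)} := rfl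
  rw [h1, Nat.card_eq_fintype_card, Fintype.card_subtype]
  have h2 : Finset.univ.filter (fun g : Perm X => g ∈ Inn X ∧ (g = 1 ∨ ∀ x, g x ≠ x))
      = insert 1 (Finset.univ.filter (fun g : Perm X => g ∈ Inn X ∧ ∀ x, g x ≠ x)) := by
    ext g
    simp only [Finset.mem_filter, Finset.mem_insert, Finset.mem_univ, true_and]
    constructor
    · rintro ⟨hg, rfl | hg'⟩
      · exact Or.inl rfl
      · exact Or.inr ⟨hg, hg'⟩
    · rintro (rfl | ⟨hg, hg'⟩)
      · exact ⟨one_mem _, Or.inl rfl⟩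
      · exact ⟨hg, Or.inr hg'⟩
  have h3' : (1 : Perm X) ∉ Finset.univ.filter (fun g : Perm X => g ∈ Inn X ∧ ∀ x, g x ≠ x) := by
    intro h
    exact (Finset.mem_filter.mp h).2.2 x₀ rfl
  rw [h2, Finset.card_insert_of_notMem h3',
    ← Fintype.card_subtype, ← Nat.card_eq_fintype_card, card_fpf hc h3]
  omega

theorem fpf_conj (h3 : 3 ≤ Fintype.card X) {g h : Perm X}
    (hg : g ∈ Inn X) (hg' : ∀ x, g x ≠ x) (hh : h ∈ Inn X) (hh' : ∀ x, h x ≠ x) :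
    ∃ c ∈ Inn X, c * g * c⁻¹ = h := by
  obtain ⟨x₀⟩ : Nonempty X := Fintype.card_pos_iff.mp (by omega)
  obtain ⟨c, hcInn, hcx₀, hcy⟩ := stab_trans hc x₀ (hg' x₀) (hh' x₀)
  refine ⟨c, hcInn, ?_⟩
  have hcinvx₀ : (c⁻¹ : Perm X) x₀ = x₀ := by
    conv_lhs => rw [← hcx₀]
    simp
  have hconjfpf : ∀ w, (c * g * c⁻¹) w ≠ w := by
    intro w hw
    apply hg' ((c⁻¹ : Perm X) w)
    have h2 := congrArg (c⁻¹ : Perm X) (hw : c (g ((c⁻¹ : Perm X) w)) = w)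
    simpa using h2
  have hconjmem : c * g * c⁻¹ ∈ Kernel hc h3 :=
    ⟨mul_mem (mul_mem hcInn hg) (inv_mem hcInn), Or.inr hconjfpf⟩
  have hhmem : h ∈ Kernel hc h3 := ⟨hh, Or.inr hh'⟩
  have hemem : h⁻¹ * (c * g * c⁻¹) ∈ Kernel hc h3 := mul_mem (inv_mem hhmem) hconjmem
  have hex₀ : (h⁻¹ * (c * g * c⁻¹)) x₀ = x₀ := by
    have h1 : (c * g * c⁻¹) x₀ = h x₀ := by
      have : c (g ((c⁻¹ : Perm X) x₀)) = (c * g * c⁻¹) x₀ := rfl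
      rw [← this, hcinvx₀, hcy]
    have : (h⁻¹ : Perm X) ((c * g * c⁻¹) x₀) = (h⁻¹ * (c * g * c⁻¹)) x₀ := rfl
    rw [← this, h1]
    simp
  rcases hemem.2 with he1 | hefpf
  · exact (inv_mul_eq_one.mp he1).symm
  · exact absurd hex₀ (hefpf x₀)

theorem fpf_orderOf_eq (h3 : 3 ≤ Fintype.card X) {g h : Perm X}
    (hg : g ∈ Inn X) (hg' : ∀ x, g x ≠ x) (hh : h ∈ Inn X) (hh' : ∀ x, h x ≠ x) :
    orderOf g = orderOf h := by
  obtain ⟨c, -, hch⟩ := fpf_conj hc h3 hg hg' hh hh'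
  rw [← hch]
  have : c * g * c⁻¹ = (MulAut.conj c) g := by simp [MulAut.conj_apply]
  rw [this]
  exact (orderOf_injective (MulAut.conj c).toMonoidHom (MulAut.conj c).injective g).symm

theorem forward (h3 : 3 ≤ Fintype.card X) : IsPrimePow (Fintype.card X) := by
  classical
  set n := Fintype.card X with hn
  obtain ⟨x₀⟩ : Nonempty X := Fintype.card_pos_iff.mp (by omega)
  -- a fixed-point-free element exists
  have hfpfpos : 0 < Nat.card {g : Perm X // g ∈ Inn X ∧ ∀ x, g x ≠ x} := by
    rw [card_fpf hc h3]; omega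
  obtain ⟨g₀, hg₀, hg₀'⟩ := (Nat.card_pos_iff.mp hfpfpos).1.some
  set p := orderOf g₀ with hp
  have hg₀ne : g₀ ≠ 1 := fun h => hg₀' x₀ (by rw [h]; rfl)
  have hp1 : 1 < p := by
    have h0 : 0 < p := orderOf_pos g₀
    have h1 : p ≠ 1 := fun h => hg₀ne (orderOf_eq_one_iff.mp h)
    omega
  have hg₀K : g₀ ∈ Kernel hc h3 := ⟨hg₀, Or.inr hg₀'⟩
  -- every fixed-point-free element has order p
  have hallp : ∀ g : Perm X, g ∈ Inn X → (∀ x, g x ≠ x) → orderOf g = p :=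
    fun g hg hg' => fpf_orderOf_eq hc h3 hg hg' hg₀ hg₀'
  -- p is prime
  have hq0 := Nat.minFac_prime (by omega : p ≠ 1)
  have hpprime : p.Prime := by
    set q0 := p.minFac with hq0def
    have hq0dvd : q0 ∣ p := Nat.minFac_dvd p
    have horder : orderOf (g₀ ^ (p / q0)) = q0 := by
      rw [orderOf_pow g₀, ← hp, Nat.gcd_eq_right (Nat.div_dvd_of_dvd hq0dvd),
        Nat.div_div_self hq0dvd (by omega)]
    have hmem : g₀ ^ (p / q0) ∈ Kernel hc h3 := pow_mem hg₀K _
    have hne : g₀ ^ (p / q0) ≠ 1 := by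
      intro h
      rw [h, orderOf_one] at horder
      exact hq0.one_lt.ne horder
    rcases hmem.2 with h1 | hfpf
    · exact absurd h1 hne
    · have := hallp _ hmem.1 hfpf
      rw [horder] at this
      exact this ▸ hq0
  -- p divides n
  have hcardK : Nat.card (Kernel hc h3) = n := card_kernel hc h3
  have hpn : p ∣ n := by
    have := orderOf_dvd_natCard (⟨g₀, hg₀K⟩ : Kernel hc h3)
    rwa [Subgroup.orderOf_mk, ← hp, hcardK] at this
  -- uniqueness of the prime divisor, by Cauchy's theorem in the kernel
  rw [isPrimePow_iff_unique_prime_dvd]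
  refine ⟨p, ⟨hpprime, hpn⟩, ?_⟩
  rintro q ⟨hq, hqn⟩
  haveI : Fact q.Prime := ⟨hq⟩
  letI : Fintype (Kernel hc h3) := Fintype.ofFinite _
  have hcardKfin : Fintype.card (Kernel hc h3) = n := by
    rw [← Nat.card_eq_fintype_card, hcardK]
  obtain ⟨k, hk⟩ := exists_prime_orderOf_dvd_card (G := Kernel hc h3) q
    (by rw [hcardKfin]; exact hqn)
  have hkorder : orderOf (k : Perm X) = q := by rw [Subgroup.orderOf_coe, hk]
  have hkne : (k : Perm X) ≠ 1 := by
    intro h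
    rw [h, orderOf_one] at hkorder
    exact hq.one_lt.ne hkorder
  rcases k.2.2 with h1 | hfpf
  · exact absurd h1 hkne
  · rw [← hkorder, hallp _ k.2.1 hfpf]

end CyclicTypeFwd


theorem stmt13 (n : ℕ) (h3 : 3 ≤ n) :
    (∃ (X : Type) (_ : Fintype X) (_ : Quandle X),
      Fintype.card X = n ∧ IsCyclicType X) ↔ IsPrimePow n := by
  constructor
  · rintro ⟨X, hfin, hq, hcard, hc⟩
    letI := hfin
    letI := hq
    rw [← hcard]
    exact CyclicTypeFwd.forward hc (by rw [hcard]; exact h3)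
  · intro hpp
    exact cyclicType_of_isPrimePow n h3 hpp
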